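/- Let $\{u_j\}_{j=0}^{n}$ be a Chebyshev set on $[a,b]$ with $n = 2l-1$, and let $\mathbf{c}$ be an interior point of the moment cone $\mathcal{M}_{n+1}$. If $\underline{\sigma}$ is the lower principal representation with interior roots $a < t_1 < \cdots < t_l < b$ and $\overline{\sigma}$ is the upper principal representation with roots $a = s_1 < s_2 < \cdots < s_{l+1} = b$, then the roots strictly interlace: $s_i < t_i < s_{i+1}$ for $i = 1,\ldots,l$. -/

import Mathlib

open Finset



noncomputable def PRIdet {l : ℕ} (u : Fin (2 * l) → ℝ → ℝ) (x : Fin (2 * l) → ℝ) : ℝ :=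
  (Matrix.of fun j i => u j (x i)).det

theorem PRIdet_ne_zero {l : ℕ} {a b : ℝ} {u : Fin (2 * l) → ℝ → ℝ}
    (hcheb : ∀ c : Fin (2 * l) → ℝ, c ≠ 0 →
      ∀ t : Fin (2 * l) → ℝ, StrictMono t → (∀ i, t i ∈ Set.Icc a b) →
        ¬ (∀ i, ∑ j, c j * u j (t i) = 0))
    (x : Fin (2 * l) → ℝ) (hx : StrictMono x) (hxab : ∀ i, x i ∈ Set.Icc a b) :
    PRIdet u x ≠ 0 := by
  intro h
  obtain ⟨v, hv, hv0⟩ := Matrix.exists_vecMul_eq_zero_iff.2 h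
  refine hcheb v hv x hx hxab (fun i => ?_)
  have := congrFun hv0 i
  simpa [Matrix.vecMul, dotProduct, Matrix.of_apply] using this





theorem PRIdet_pair_pos {l : ℕ} {a b : ℝ} {u : Fin (2 * l) → ℝ → ℝ}
    (hcont : ∀ j, ContinuousOn (u j) (Set.Icc a b))
    (hcheb : ∀ c : Fin (2 * l) → ℝ, c ≠ 0 →
      ∀ t : Fin (2 * l) → ℝ, StrictMono t → (∀ i, t i ∈ Set.Icc a b) →
        ¬ (∀ i, ∑ j, c j * u j (t i) = 0))
    {x y : Fin (2 * l) → ℝ} (hx : StrictMono x) (hxab : ∀ i, x i ∈ Set.Icc a b)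
    (hy : StrictMono y) (hyab : ∀ i, y i ∈ Set.Icc a b) :
    0 < PRIdet u x * PRIdet u y := by
  set S : Set (Fin (2 * l) → ℝ) := {z | StrictMono z ∧ ∀ i, z i ∈ Set.Icc a b} with hS
  have hxS : x ∈ S := ⟨hx, hxab⟩
  have hyS : y ∈ S := ⟨hy, hyab⟩
  have hconv : Convex ℝ S := by
    intro p hp q hq α β hα hβ hαβ
    constructor
    · intro i j hij
      have hpi : p i < p j := hp.1 hij
      have hqi : q i < q j := hq.1 hij
      show α * p i + β * q i < α * p j + β * q j
      rcases eq_or_lt_of_le hα with h | h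
      · have hβ1 : β = 1 := by linarith
        simp only [← h, hβ1]; linarith
      · have h1 : α * p i < α * p j := by exact (mul_lt_mul_iff_right₀ h).2 hpi
        have h2 : β * q i ≤ β * q j := mul_le_mul_of_nonneg_left hqi.le hβ
        linarith
    · intro i
      have := (convex_Icc a b) (hp.2 i) (hq.2 i) hα hβ hαβ
      simpa using this
  have hDcont : ContinuousOn (PRIdet u) S := by
    have hmat : ContinuousOn
        (fun z : Fin (2 * l) → ℝ => (Matrix.of fun j i => u j (z i) :
          Matrix (Fin (2 * l)) (Fin (2 * l)) ℝ)) S := by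
      apply continuousOn_pi.2; intro j
      apply continuousOn_pi.2; intro i
      exact (hcont j).comp ((continuous_apply i).continuousOn) (fun z hz => hz.2 i)
    exact (continuous_id.matrix_det).comp_continuousOn hmat
  have himg : ((PRIdet u) '' S).OrdConnected :=
    ((hconv.isPreconnected).image _ hDcont).ordConnected
  have hx0 : PRIdet u x ≠ 0 := PRIdet_ne_zero hcheb x hx hxab
  have hy0 : PRIdet u y ≠ 0 := PRIdet_ne_zero hcheb y hy hyab
  have hzero : (0 : ℝ) ∉ (PRIdet u) '' S := by
    rintro ⟨z, hzS, hz0⟩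
    exact PRIdet_ne_zero hcheb z hzS.1 hzS.2 hz0
  rcases hx0.lt_or_gt with hxneg | hxpos <;> rcases hy0.lt_or_gt with hyneg | hypos
  · exact mul_pos_of_neg_of_neg hxneg hyneg
  · exact absurd (himg.out ⟨x, hxS, rfl⟩ ⟨y, hyS, rfl⟩ ⟨hxneg.le, hypos.le⟩) hzero
  · exact absurd (himg.out ⟨y, hyS, rfl⟩ ⟨x, hxS, rfl⟩ ⟨hyneg.le, hxpos.le⟩) hzero
  · exact mul_pos hxpos hypos





theorem PRI_exists_superset {a b : ℝ} (hab : a < b) :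
    ∀ (m : ℕ) (F : Finset ℝ), (∀ z ∈ F, z ∈ Set.Icc a b) → F.card ≤ m →
      ∃ G : Finset ℝ, F ⊆ G ∧ (∀ z ∈ G, z ∈ Set.Icc a b) ∧ G.card = m := by
  intro m
  induction m with
  | zero => exact fun F hF hc => ⟨F, subset_rfl, hF, Nat.le_zero.1 hc⟩
  | succ m ih =>
    intro F hF hc
    rcases eq_or_lt_of_le hc with h | h
    · exact ⟨F, subset_rfl, hF, h⟩
    · obtain ⟨G, hFG, hG, hGc⟩ := ih F hF (Nat.lt_succ_iff.1 h)
      obtain ⟨z, hz, hzG⟩ := (Set.Icc_infinite hab).exists_notMem_finset G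
      refine ⟨insert z G, hFG.trans (subset_insert _ _), ?_, ?_⟩
      · intro w hw
        rcases mem_insert.1 hw with rfl | hw
        · exact hz
        · exact hG w hw
      · rw [card_insert_of_notMem hzG, hGc]

theorem PRI_kernel_zero {l : ℕ} {a b : ℝ} {u : Fin (2 * l) → ℝ → ℝ} (hab : a < b)
    (hcheb : ∀ c : Fin (2 * l) → ℝ, c ≠ 0 →
      ∀ t : Fin (2 * l) → ℝ, StrictMono t → (∀ i, t i ∈ Set.Icc a b) →
        ¬ (∀ i, ∑ j, c j * u j (t i) = 0))
    (F : Finset ℝ) (hF : ∀ z ∈ F, z ∈ Set.Icc a b) (hcard : F.card ≤ 2 * l)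
    (w : ℝ → ℝ) (hker : ∀ j, ∑ z ∈ F, w z * u j z = 0) :
    ∀ z ∈ F, w z = 0 := by
  classical
  obtain ⟨G, hFG, hG, hGc⟩ := PRI_exists_superset hab (2 * l) F hF hcard
  set X : Fin (2 * l) → ℝ := fun k => G.orderEmbOfFin hGc k with hX
  have hXmono : StrictMono X := (G.orderEmbOfFin hGc).strictMono
  have hXmem : ∀ k, X k ∈ Set.Icc a b := fun k => hG _ (G.orderEmbOfFin_mem hGc k)
  set w' : ℝ → ℝ := fun z => if z ∈ F then w z else 0 with hw'
  have hkerG : ∀ j, ∑ z ∈ G, w' z * u j z = 0 := by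
    intro j
    rw [← Finset.sum_subset hFG (fun z _ hzF => by simp [hw', hzF])]
    rw [← hker j]
    exact Finset.sum_congr rfl fun z hz => by simp [hw', hz]
  set ε : Fin (2 * l) → ℝ := fun k => w' (X k) with hε
  have hkerX : ∀ j, ∑ k, ε k * u j (X k) = 0 := by
    intro j
    rw [← hkerG j, ← Finset.sum_coe_sort G (fun z => w' z * u j z)]
    exact Fintype.sum_equiv (G.orderIsoOfFin hGc).toEquiv _ _ (fun k => by
      simp [hε, hX, Finset.coe_orderIsoOfFin_apply])
  have hεzero : ε = 0 := by
    by_contra hne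
    have hdet0 : (Matrix.of fun j k => u j (X k)).det = 0 := by
      refine Matrix.exists_mulVec_eq_zero_iff.1 ⟨ε, hne, ?_⟩
      funext j
      show ∑ k, u j (X k) * ε k = 0
      rw [← hkerX j]
      exact Finset.sum_congr rfl fun k _ => mul_comm _ _
    exact PRIdet_ne_zero hcheb X hXmono hXmem hdet0
  intro z hz
  have hzG : z ∈ G := hFG hz
  set k : Fin (2 * l) := (G.orderIsoOfFin hGc).symm ⟨z, hzG⟩ with hk
  have hXk : X k = z := by
    simp [hX, hk, ← Finset.coe_orderIsoOfFin_apply]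
  have : ε k = 0 := by rw [hεzero]; rfl
  rw [hε] at this
  simp only [hXk, hw'] at this
  simpa [hz] using this





theorem PRI_kernel_alternate {l : ℕ} {a b : ℝ} {u : Fin (2 * l) → ℝ → ℝ}
    (hcont : ∀ j, ContinuousOn (u j) (Set.Icc a b))
    (hcheb : ∀ c : Fin (2 * l) → ℝ, c ≠ 0 →
      ∀ t : Fin (2 * l) → ℝ, StrictMono t → (∀ i, t i ∈ Set.Icc a b) →
        ¬ (∀ i, ∑ j, c j * u j (t i) = 0))
    (x : Fin (2 * l + 1) → ℝ) (hx : StrictMono x) (hxab : ∀ i, x i ∈ Set.Icc a b)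
    (ε : Fin (2 * l + 1) → ℝ) (hker : ∀ j, ∑ k, ε k * u j (x k) = 0)
    (k : Fin (2 * l)) (h0 : ε k.castSucc ≠ 0) (h1 : ε k.succ ≠ 0) :
    ε k.castSucc * ε k.succ < 0 := by
  classical
  set σ : Fin (2 * l) → Fin (2 * l + 1) := k.succ.succAbove with hσ
  set τ : Fin (2 * l) → Fin (2 * l + 1) := k.castSucc.succAbove with hτ
  have hσk : σ k = k.castSucc := Fin.succAbove_of_castSucc_lt _ _ (Fin.castSucc_lt_succ (i := k))
  have hτk : τ k = k.succ := Fin.succAbove_of_le_castSucc _ _ le_rfl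
  have hστ : ∀ i, i ≠ k → σ i = τ i := by
    intro i hi
    rcases lt_or_gt_of_ne hi with h | h
    · rw [hσ, hτ, Fin.succAbove_of_castSucc_lt _ _
        (lt_trans (Fin.castSucc_lt_castSucc_iff.2 h) (Fin.castSucc_lt_succ (i := k))),
        Fin.succAbove_of_castSucc_lt _ _ (Fin.castSucc_lt_castSucc_iff.2 h)]
    · rw [hσ, hτ, Fin.succAbove_of_le_castSucc _ _ (Fin.succ_le_castSucc_iff.2 h),
        Fin.succAbove_of_le_castSucc _ _ (Fin.castSucc_le_castSucc_iff.2 h.le)]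
  set A : Matrix (Fin (2 * l)) (Fin (2 * l)) ℝ := Matrix.of fun j i => u j (x (σ i)) with hA
  set A' : Matrix (Fin (2 * l)) (Fin (2 * l)) ℝ := Matrix.of fun j i => u j (x (τ i)) with hA'
  have hAmono : StrictMono (x ∘ σ) := hx.comp (Fin.strictMono_succAbove _)
  have hA'mono : StrictMono (x ∘ τ) := hx.comp (Fin.strictMono_succAbove _)
  have hdet : 0 < A.det * A'.det :=
    PRIdet_pair_pos hcont hcheb hAmono (fun i => hxab _) hA'mono (fun i => hxab _)
  set W : Fin (2 * l) → ℝ :=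
    fun j => ε k.castSucc * u j (x k.castSucc) + ε k.succ * u j (x k.succ) with hW
  set B : Matrix (Fin (2 * l)) (Fin (2 * l)) ℝ := A.updateCol k W with hB
  set ν : Fin (2 * l) → ℝ := fun i => if i = k then 1 else ε (σ i) with hν
  have hν0 : ν ≠ 0 := by
    intro h
    have := congrFun h k
    simp [hν] at this
  have hBν : B.mulVec ν = 0 := by
    funext j
    show ∑ i, B j i * ν i = 0
    rw [← Finset.add_sum_erase _ _ (mem_univ k)]
    have hBk : B j k * ν k = ε k.castSucc * u j (x k.castSucc) + ε k.succ * u j (x k.succ) := by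
      simp [hB, hν, Matrix.updateCol_apply, hW]
    have hrest : ∑ i ∈ univ.erase k, B j i * ν i
        = ∑ i ∈ univ.erase k, ε (σ i) * u j (x (σ i)) := by
      refine Finset.sum_congr rfl fun i hi => ?_
      have hik : i ≠ k := (mem_erase.1 hi).1
      simp [hB, hν, Matrix.updateCol_apply, hik, hA, mul_comm]
    rw [hBk, hrest]
    have hk0 := hker j
    rw [Fin.sum_univ_succAbove (fun p => ε p * u j (x p)) k.succ] at hk0
    rw [← Finset.add_sum_erase _ (fun i => ε (σ i) * u j (x (σ i))) (mem_univ k)] at hk0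
    rw [hσk] at hk0
    linarith [hk0]
  have hBdet : B.det = 0 := Matrix.exists_mulVec_eq_zero_iff.1 ⟨ν, hν0, hBν⟩
  have hexp : B.det = ε k.castSucc * A.det + ε k.succ * A'.det := by
    have hWeq : W = (ε k.castSucc • fun j => u j (x k.castSucc))
        + (ε k.succ • fun j => u j (x k.succ)) := by
      funext j; simp [hW]
    have hfirst : A.updateCol k (fun j => u j (x k.castSucc)) = A := by
      have hcol : (fun j => u j (x k.castSucc)) = fun j => A j k := by
        funext j; rw [hA]; simp [hσk]
      rw [hcol, Matrix.updateCol_eq_self]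
    have hsecond : A.updateCol k (fun j => u j (x k.succ)) = A' := by
      ext j i
      rw [Matrix.updateCol_apply]
      by_cases hik : i = k
      · subst hik; simp [hA', hτk]
      · simp [hik, hA, hA', hστ i hik]
    rw [hB, hWeq, Matrix.det_updateCol_add, Matrix.det_updateCol_smul,
      Matrix.det_updateCol_smul, hfirst, hsecond]
  have hsum : ε k.castSucc * A.det + ε k.succ * A'.det = 0 := by rw [← hexp, hBdet]
  have hX2 : 0 < A.det * A.det := mul_self_pos.2 (fun h => by
    rw [h] at hdet; simp at hdet)
  have hq2 : 0 < ε k.succ * ε k.succ := mul_self_pos.2 h1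
  have key : ε k.castSucc * ε k.succ * (A.det * A.det)
      = -(ε k.succ * ε k.succ * (A.det * A'.det)) := by
    linear_combination (ε k.succ * A.det) * hsum
  by_contra hge
  push_neg at hge
  have h1' : 0 ≤ ε k.castSucc * ε k.succ * (A.det * A.det) := mul_nonneg hge hX2.le
  nlinarith [mul_pos hq2 hdet]


theorem PRI_fin_le_strictMono {n : ℕ} {f : Fin n → Fin n} (hf : StrictMono f) :
    ∀ m, ∀ j : Fin n, (j : ℕ) = m → m ≤ (f j : ℕ) := by
  intro m
  induction m with
  | zero => exact fun j _ => Nat.zero_le _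
  | succ m ih =>
    intro j hj
    have hm : m < n := by omega
    have h1 : (⟨m, hm⟩ : Fin n) < j := by
      rw [Fin.lt_def]; simp only [Fin.val_mk]; omega
    have h2 := ih ⟨m, hm⟩ rfl
    have h3 : f ⟨m, hm⟩ < f j := hf h1
    rw [Fin.lt_def] at h3
    omega

theorem PRI_fin_strictMono_id {n : ℕ} {f : Fin n → Fin n} (hf : StrictMono f) :
    ∀ j, f j = j := by
  have h1 : ∀ j : Fin n, (j : ℕ) ≤ f j := fun j => PRI_fin_le_strictMono hf _ j rfl
  have hg : StrictMono (fun j : Fin n => (f j.rev).rev) := by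
    intro i j hij
    exact Fin.rev_lt_rev.mpr (hf (Fin.rev_lt_rev.mpr hij))
  have h1g : ∀ j : Fin n, (j : ℕ) ≤ ((f j.rev).rev : ℕ) :=
    fun j => PRI_fin_le_strictMono hg _ j rfl
  have h2 : ∀ j : Fin n, (f j : ℕ) ≤ j := by
    intro j
    have := h1g j.rev
    rw [Fin.rev_rev] at this
    have hv1 : (j.rev : ℕ) = n - ((j : ℕ) + 1) := Fin.val_rev _
    have hv2 : ((f j).rev : ℕ) = n - (((f j) : ℕ) + 1) := Fin.val_rev _
    have hjn : (j : ℕ) < n := j.isLt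
    have hfn : ((f j) : ℕ) < n := (f j).isLt
    omega
  intro j
  exact le_antisymm (Fin.le_def.2 (h2 j)) (Fin.le_def.2 (h1 j))

/-- Interlacing of the two principal representations for odd `n = 2l - 1`:
the `l` interior roots `t` of the lower principal representation and the
`l + 1` roots `s` of the upper principal representation (which include both
endpoints) of the same moment vector strictly interlace:
`s i < t i < s (i+1)`. -/
theorem principal_representations_interlace
    (l : ℕ) (hl : 0 < l) (a b : ℝ) (hab : a < b) (u : Fin (2 * l) → ℝ → ℝ)
    (hcont : ∀ j, ContinuousOn (u j) (Set.Icc a b))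
    (hcheb : ∀ c : Fin (2 * l) → ℝ, c ≠ 0 →
      ∀ t : Fin (2 * l) → ℝ, StrictMono t → (∀ i, t i ∈ Set.Icc a b) →
        ¬ (∀ i, ∑ j, c j * u j (t i) = 0))
    (c : Fin (2 * l) → ℝ)
    -- lower principal representation: l interior roots
    (t : Fin l → ℝ) (lam : Fin l → ℝ)
    (ht : StrictMono t) (htab : ∀ i, t i ∈ Set.Ioo a b)
    (hlam : ∀ i, 0 < lam i)
    (hlower : ∀ j, c j = ∑ i, lam i * u j (t i))
    -- upper principal representation: l + 1 roots including both endpoints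
    (s : Fin (l + 1) → ℝ) (mu : Fin (l + 1) → ℝ)
    (hs : StrictMono s) (hsab : ∀ i, s i ∈ Set.Icc a b)
    (hsa : s 0 = a) (hsb : s (Fin.last l) = b)
    (hmu : ∀ i, 0 < mu i)
    (hupper : ∀ j, c j = ∑ i, mu i * u j (s i)) :
    ∀ i : Fin l, s i.castSucc < t i ∧ t i < s i.succ := by
  classical
  have htinj : Function.Injective t := ht.injective
  have hsinj : Function.Injective s := hs.injective
  set T : Finset ℝ := Finset.image t Finset.univ ∪ Finset.image s Finset.univ with hT
  have htmemT : ∀ i, t i ∈ T := fun i =>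
    Finset.mem_union_left _ (Finset.mem_image_of_mem t (Finset.mem_univ i))
  have hsmemT : ∀ jj, s jj ∈ T := fun jj =>
    Finset.mem_union_right _ (Finset.mem_image_of_mem s (Finset.mem_univ jj))
  have hTmem : ∀ z ∈ T, z ∈ Set.Icc a b := by
    intro z hz
    rcases Finset.mem_union.1 hz with h | h
    · obtain ⟨i, _, rfl⟩ := Finset.mem_image.1 h
      exact ⟨(htab i).1.le, (htab i).2.le⟩
    · obtain ⟨i, _, rfl⟩ := Finset.mem_image.1 h
      exact hsab i
  set w : ℝ → ℝ := fun z => (∑ i, if t i = z then lam i else 0)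
      + (∑ jj, if s jj = z then -(mu jj) else 0) with hw
  have hker : ∀ j, ∑ z ∈ T, w z * u j z = 0 := by
    intro j
    have h1 : ∑ z ∈ T, (∑ i, if t i = z then lam i else 0) * u j z
        = ∑ i, lam i * u j (t i) := by
      have e1 : ∀ z ∈ T, (∑ i, if t i = z then lam i else 0) * u j z
          = ∑ i, (if t i = z then lam i * u j z else 0) := by
        intro z _
        rw [Finset.sum_mul]
        exact Finset.sum_congr rfl fun i _ => by rw [ite_mul, zero_mul]
      rw [Finset.sum_congr rfl e1, Finset.sum_comm]
      refine Finset.sum_congr rfl fun i _ => ?_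
      rw [Finset.sum_ite_eq T (t i) (fun z => lam i * u j z), if_pos (htmemT i)]
    have h2 : ∑ z ∈ T, (∑ jj, if s jj = z then -(mu jj) else 0) * u j z
        = ∑ jj, -(mu jj) * u j (s jj) := by
      have e1 : ∀ z ∈ T, (∑ jj, if s jj = z then -(mu jj) else 0) * u j z
          = ∑ jj, (if s jj = z then -(mu jj) * u j z else 0) := by
        intro z _
        rw [Finset.sum_mul]
        exact Finset.sum_congr rfl fun jj _ => by rw [ite_mul, zero_mul]
      rw [Finset.sum_congr rfl e1, Finset.sum_comm]
      refine Finset.sum_congr rfl fun jj _ => ?_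
      rw [Finset.sum_ite_eq T (s jj) (fun z => -(mu jj) * u j z), if_pos (hsmemT jj)]
    calc ∑ z ∈ T, w z * u j z
        = (∑ z ∈ T, (∑ i, if t i = z then lam i else 0) * u j z)
          + ∑ z ∈ T, (∑ jj, if s jj = z then -(mu jj) else 0) * u j z := by
          rw [← Finset.sum_add_distrib]
          exact Finset.sum_congr rfl fun z _ => by rw [hw]; ring
      _ = (∑ i, lam i * u j (t i)) + ∑ jj, -(mu jj) * u j (s jj) := by rw [h1, h2]
      _ = 0 := by
          have hneg : ∑ jj, -(mu jj) * u j (s jj) = -(∑ jj, mu jj * u j (s jj)) := by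
            simp [neg_mul]
          rw [hneg, ← hlower j, ← hupper j]
          ring
  have haT : a ∈ T := by rw [← hsa]; exact hsmemT 0
  have hwa : w a = -(mu 0) := by
    show (∑ i, if t i = a then lam i else 0) + (∑ jj, if s jj = a then -(mu jj) else 0) = -(mu 0)
    have h1 : (∑ i, if t i = a then lam i else 0) = 0 :=
      Finset.sum_eq_zero fun i _ => if_neg (fun h => by
        have := (htab i).1; rw [h] at this; exact lt_irrefl a this)
    have h2 : (∑ jj, if s jj = a then -(mu jj) else 0) = -(mu 0) := by
      have e : ∀ jj : Fin (l + 1), (if s jj = a then -(mu jj) else 0)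
          = (if jj = (0 : Fin (l + 1)) then -(mu jj) else 0) := by
        intro jj
        by_cases hjj : jj = 0
        · subst hjj; rw [if_pos hsa, if_pos rfl]
        · rw [if_neg, if_neg hjj]
          intro h
          exact hjj (hsinj (h.trans hsa.symm))
      rw [Finset.sum_congr rfl fun jj _ => e jj,
        Finset.sum_ite_eq' Finset.univ (0 : Fin (l + 1)) (fun jj => -(mu jj)),
        if_pos (Finset.mem_univ _)]
    rw [h1, h2, zero_add]
  have hwa0 : w a ≠ 0 := by
    rw [hwa]; have := hmu 0; intro h; rw [neg_eq_zero] at h; linarith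
  have hcardle : T.card ≤ 2 * l + 1 := by
    have h := Finset.card_union_le (Finset.image t Finset.univ) (Finset.image s Finset.univ)
    rw [← hT] at h
    have h1 := Finset.card_image_le (f := t) (s := Finset.univ)
    have h2 := Finset.card_image_le (f := s) (s := Finset.univ)
    simp [Finset.card_univ] at h1 h2
    omega
  have hcard : T.card = 2 * l + 1 := by
    by_contra hne
    have hle : T.card ≤ 2 * l := by omega
    exact hwa0 (PRI_kernel_zero hab hcheb T hTmem hle w hker a haT)
  have hct : (Finset.image t Finset.univ).card = l := by
    rw [Finset.card_image_of_injective _ htinj, Finset.card_univ, Fintype.card_fin]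
  have hcs : (Finset.image s Finset.univ).card = l + 1 := by
    rw [Finset.card_image_of_injective _ hsinj, Finset.card_univ, Fintype.card_fin]
  have hdisj : ∀ i jj, t i ≠ s jj := by
    intro i jj heq
    have hUI := Finset.card_union_add_card_inter (Finset.image t Finset.univ)
      (Finset.image s Finset.univ)
    rw [← hT, hcard, hct, hcs] at hUI
    have hint : 0 < ((Finset.image t Finset.univ) ∩ (Finset.image s Finset.univ)).card := by
      refine Finset.card_pos.2 ⟨t i, Finset.mem_inter.2
        ⟨Finset.mem_image_of_mem t (Finset.mem_univ i), ?_⟩⟩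
      rw [heq]; exact Finset.mem_image_of_mem s (Finset.mem_univ jj)
    omega
  have hwt : ∀ i, w (t i) = lam i := by
    intro i
    show (∑ i', if t i' = t i then lam i' else 0)
      + (∑ jj, if s jj = t i then -(mu jj) else 0) = lam i
    have h1 : (∑ i', if t i' = t i then lam i' else 0) = lam i := by
      have e : ∀ i', (if t i' = t i then lam i' else 0) = (if i' = i then lam i' else 0) := by
        intro i'
        by_cases h : i' = i
        · subst h; simp
        · rw [if_neg (fun hh => h (htinj hh)), if_neg h]
      rw [Finset.sum_congr rfl fun i' _ => e i',
        Finset.sum_ite_eq' Finset.univ i (fun i' => lam i'), if_pos (Finset.mem_univ _)]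
    have h2 : (∑ jj, if s jj = t i then -(mu jj) else 0) = 0 :=
      Finset.sum_eq_zero fun jj _ => if_neg fun h => hdisj i jj h.symm
    rw [h1, h2, add_zero]
  have hws : ∀ jj, w (s jj) = -(mu jj) := by
    intro jj
    show (∑ i, if t i = s jj then lam i else 0)
      + (∑ jj', if s jj' = s jj then -(mu jj') else 0) = -(mu jj)
    have h1 : (∑ i, if t i = s jj then lam i else 0) = 0 :=
      Finset.sum_eq_zero fun i _ => if_neg (hdisj i jj)
    have h2 : (∑ jj', if s jj' = s jj then -(mu jj') else 0) = -(mu jj) := by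
      have e : ∀ jj', (if s jj' = s jj then -(mu jj') else 0)
          = (if jj' = jj then -(mu jj') else 0) := by
        intro jj'
        by_cases h : jj' = jj
        · subst h; simp
        · rw [if_neg (fun hh => h (hsinj hh)), if_neg h]
      rw [Finset.sum_congr rfl fun jj' _ => e jj',
        Finset.sum_ite_eq' Finset.univ jj (fun jj' => -(mu jj')), if_pos (Finset.mem_univ _)]
    rw [h1, h2, zero_add]
  set X : Fin (2 * l + 1) → ℝ := fun k => T.orderEmbOfFin hcard k with hX
  have hXmono : StrictMono X := (T.orderEmbOfFin hcard).strictMono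
  have hXmem : ∀ k, X k ∈ Set.Icc a b := fun k => hTmem _ (T.orderEmbOfFin_mem hcard k)
  set ε : Fin (2 * l + 1) → ℝ := fun k => w (X k) with hε
  have hkerX : ∀ j, ∑ k, ε k * u j (X k) = 0 := by
    intro j
    rw [← hker j, ← Finset.sum_coe_sort T (fun z => w z * u j z)]
    exact Fintype.sum_equiv (T.orderIsoOfFin hcard).toEquiv _ _ (fun k => by
      simp [hε, hX, Finset.coe_orderIsoOfFin_apply])
  have hXrange : ∀ k, (∃ i, t i = X k) ∨ (∃ jj, s jj = X k) := by
    intro k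
    have hmem : X k ∈ T := T.orderEmbOfFin_mem hcard k
    rw [hT] at hmem
    rcases Finset.mem_union.1 hmem with h | h
    · obtain ⟨i, _, hi⟩ := Finset.mem_image.1 h; exact Or.inl ⟨i, hi⟩
    · obtain ⟨jj, _, hjj⟩ := Finset.mem_image.1 h; exact Or.inr ⟨jj, hjj⟩
  have hne : ∀ k, ε k ≠ 0 := by
    intro k
    rcases hXrange k with ⟨i, hi⟩ | ⟨jj, hjj⟩
    · show w (X k) ≠ 0
      rw [← hi, hwt i]; exact (hlam i).ne'
    · show w (X k) ≠ 0
      rw [← hjj, hws jj]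
      have := hmu jj; intro h; rw [neg_eq_zero] at h; linarith
  have halt : ∀ k : Fin (2 * l), ε k.castSucc * ε k.succ < 0 :=
    fun k => PRI_kernel_alternate hcont hcheb X hXmono hXmem ε hkerX k (hne _) (hne _)
  have hX0 : X 0 = a := by
    have h1 : a ≤ X 0 := (hXmem 0).1
    have hmem : a ∈ Set.range (T.orderEmbOfFin hcard) := by
      rw [Finset.range_orderEmbOfFin T hcard]
      exact_mod_cast haT
    obtain ⟨k, hk⟩ := hmem
    have h2 : X 0 ≤ X k := hXmono.monotone (Fin.zero_le k)
    have hXk : X k = a := hk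
    rw [hXk] at h2
    exact le_antisymm h2 h1
  have hε0 : ε 0 < 0 := by
    show w (X 0) < 0
    rw [hX0, hwa]
    have := hmu 0; linarith
  have hsign : ∀ k : Fin (2 * l + 1), (Even (k : ℕ) → ε k < 0) ∧ (¬ Even (k : ℕ) → 0 < ε k) := by
    intro k
    induction k using Fin.induction with
    | zero =>
      refine ⟨fun _ => hε0, fun h => absurd ?_ h⟩
      simp
    | succ i ih =>
      have hprod := halt i
      have hv1 : ((i.castSucc : Fin (2 * l + 1)) : ℕ) = (i : ℕ) := Fin.coe_castSucc i
      have hv2 : ((i.succ : Fin (2 * l + 1)) : ℕ) = (i : ℕ) + 1 := Fin.val_succ i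
      constructor
      · intro hev
        rw [hv2] at hev
        have hodd : ¬ Even ((i.castSucc : Fin (2 * l + 1)) : ℕ) := by
          rw [hv1]; exact Nat.even_add_one.1 hev
        have hpos := ih.2 hodd
        by_contra hge; push_neg at hge
        nlinarith [mul_nonneg hpos.le hge]
      · intro hodd
        rw [hv2] at hodd
        have hev : Even ((i.castSucc : Fin (2 * l + 1)) : ℕ) := by
          rw [hv1]; exact not_not.1 (fun h => hodd (Nat.even_add_one.2 h))
        have hneg := ih.1 hev
        by_contra hge; push_neg at hge
        nlinarith [mul_nonneg (neg_nonneg.2 hneg.le) (neg_nonneg.2 hge)]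
  have hspoint : ∀ (jj : Fin (l + 1)) (k : Fin (2 * l + 1)), s jj = X k → Even (k : ℕ) := by
    intro jj k hk
    by_contra hodd
    have hpos := (hsign k).2 hodd
    have heq : ε k = -(mu jj) := by show w (X k) = _; rw [← hk, hws jj]
    rw [heq] at hpos; have := hmu jj; linarith
  have htpoint : ∀ (i : Fin l) (k : Fin (2 * l + 1)), t i = X k → ¬ Even (k : ℕ) := by
    intro i k hk hev
    have hneg := (hsign k).1 hev
    have heq : ε k = lam i := by show w (X k) = _; rw [← hk, hwt i]
    rw [heq] at hneg; have := hlam i; linarith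
  set e := T.orderIsoOfFin hcard with he
  have hXe : ∀ k, X k = ↑(e k) := fun k => (Finset.coe_orderIsoOfFin_apply T hcard k).symm
  set g : Fin (l + 1) → Fin (2 * l + 1) := fun jj => e.symm ⟨s jj, hsmemT jj⟩ with hg
  have hXg : ∀ jj, X (g jj) = s jj := by
    intro jj
    rw [hXe, hg]
    simp
  have hgmono : StrictMono g := by
    intro j1 j2 hj
    exact e.symm.strictMono (Subtype.mk_lt_mk.2 (hs hj))
  have hgval : ∀ jj, ((g jj : Fin (2 * l + 1)) : ℕ) = 2 * (jj : ℕ) := by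
    have hgev : ∀ jj, Even ((g jj : Fin (2 * l + 1)) : ℕ) :=
      fun jj => hspoint jj (g jj) (hXg jj).symm
    set h2f : Fin (l + 1) → Fin (l + 1) := fun jj =>
      ⟨((g jj : Fin (2 * l + 1)) : ℕ) / 2, by have := (g jj).isLt; omega⟩ with hh2
    have h2mono : StrictMono h2f := by
      intro j1 j2 hj
      have h12 := hgmono hj
      rw [Fin.lt_def] at h12 ⊢
      obtain ⟨m1, hm1⟩ := hgev j1
      obtain ⟨m2, hm2⟩ := hgev j2
      simp only [hh2]
      omega
    intro jj
    have hid := PRI_fin_strictMono_id h2mono jj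
    have hvv : ((h2f jj : Fin (l + 1)) : ℕ) = (jj : ℕ) := by rw [hid]
    obtain ⟨m, hm⟩ := hgev jj
    simp only [hh2] at hvv
    omega
  set g' : Fin l → Fin (2 * l + 1) := fun i => e.symm ⟨t i, htmemT i⟩ with hg'
  have hXg' : ∀ i, X (g' i) = t i := by
    intro i
    rw [hXe, hg']
    simp
  have hg'mono : StrictMono g' := by
    intro j1 j2 hj
    exact e.symm.strictMono (Subtype.mk_lt_mk.2 (ht hj))
  have hg'val : ∀ i, ((g' i : Fin (2 * l + 1)) : ℕ) = 2 * (i : ℕ) + 1 := by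
    have hg'odd : ∀ i, ¬ Even ((g' i : Fin (2 * l + 1)) : ℕ) :=
      fun i => htpoint i (g' i) (hXg' i).symm
    set h2f' : Fin l → Fin l := fun i =>
      ⟨((g' i : Fin (2 * l + 1)) : ℕ) / 2, by
        have h1 := (g' i).isLt
        have h2 := Nat.not_even_iff.1 (hg'odd i)
        omega⟩ with hh2'
    have h2'mono : StrictMono h2f' := by
      intro j1 j2 hj
      have h12 := hg'mono hj
      rw [Fin.lt_def] at h12 ⊢
      have o1 := Nat.not_even_iff.1 (hg'odd j1)
      have o2 := Nat.not_even_iff.1 (hg'odd j2)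
      simp only [hh2']
      omega
    intro i
    have hid := PRI_fin_strictMono_id h2'mono i
    have hvv : ((h2f' i : Fin l) : ℕ) = (i : ℕ) := by rw [hid]
    have o := Nat.not_even_iff.1 (hg'odd i)
    simp only [hh2'] at hvv
    omega
  intro i
  have k1 : ((g i.castSucc : Fin (2 * l + 1)) : ℕ) = 2 * (i : ℕ) := by
    rw [hgval]; rw [Fin.coe_castSucc]
  have k2 : ((g' i : Fin (2 * l + 1)) : ℕ) = 2 * (i : ℕ) + 1 := hg'val i
  have k3 : ((g i.succ : Fin (2 * l + 1)) : ℕ) = 2 * (i : ℕ) + 2 := by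
    rw [hgval, Fin.val_succ]; ring
  constructor
  · rw [← hXg i.castSucc, ← hXg' i]
    apply hXmono
    rw [Fin.lt_def, k1, k2]; omega
  · rw [← hXg' i, ← hXg i.succ]
    apply hXmono
    rw [Fin.lt_def, k2, k3]; omega
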